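/- For all p, q ∈ ℝ³ and every unit vector ω ∈ ℝ³ (|ω| = 1): (i) the denominator satisfies (p⁰ + q⁰)² − (ω·(p+q))² ≥ 4m²c² > 0, so that a(p,q,ω) = 2(p⁰ + q⁰)[ω·(p⁰ q − q⁰ p)] / [(p⁰ + q⁰)² − (ω·(p+q))²] is well defined; and (ii) setting p' = p + a(p,q,ω) ω and q' = q − a(p,q,ω) ω, the total energy is conserved: √(m²c² + |p'|²) + √(m²c² + |q'|²) = p⁰ + q⁰. -/
import Mathlib


noncomputable section

/-- Euclidean inner product on ℝ³. -/
def dot3 (p q : Fin 3 → ℝ) : ℝ := ∑ i, p i * q i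

/-- The relativistic energy `p⁰ = √(m²c² + |p|²)`. -/
noncomputable def pZero (m c : ℝ) (p : Fin 3 → ℝ) : ℝ :=
  Real.sqrt (m ^ 2 * c ^ 2 + dot3 p p)

/-- The Glassey–Strauss collision parameter
`a(p,q,ω) = 2(p⁰ + q⁰)[ω·(p⁰q − q⁰p)] / [(p⁰ + q⁰)² − (ω·(p+q))²]`. -/
noncomputable def aGS (m c : ℝ) (p q ω : Fin 3 → ℝ) : ℝ :=
  2 * (pZero m c p + pZero m c q) * dot3 ω (pZero m c p • q - pZero m c q • p) /
    ((pZero m c p + pZero m c q) ^ 2 - (dot3 ω (p + q)) ^ 2)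

lemma dot3_self_nonneg (p : Fin 3 → ℝ) : 0 ≤ dot3 p p :=
  Finset.sum_nonneg fun i _ => mul_self_nonneg _

lemma cauchy3 (ω p : Fin 3 → ℝ) (hω : dot3 ω ω = 1) : (dot3 ω p) ^ 2 ≤ dot3 p p := by
  have key : dot3 p p * dot3 ω ω - (dot3 ω p) ^ 2 =
      (ω 0 * p 1 - ω 1 * p 0) ^ 2 + (ω 0 * p 2 - ω 2 * p 0) ^ 2
        + (ω 1 * p 2 - ω 2 * p 1) ^ 2 := by
    simp [dot3, Fin.sum_univ_three]; ring
  rw [hω, mul_one] at key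
  nlinarith [sq_nonneg (ω 0 * p 1 - ω 1 * p 0), sq_nonneg (ω 0 * p 2 - ω 2 * p 0),
    sq_nonneg (ω 1 * p 2 - ω 2 * p 1)]

lemma pq_aux (M P Q α β : ℝ) (hM : 0 < M) (hP0 : 0 < P) (hQ0 : 0 < Q)
    (hPa : M + α ^ 2 ≤ P ^ 2) (hQb : M + β ^ 2 ≤ Q ^ 2) : M + α * β ≤ P * Q := by
  rcases le_or_gt (M + α * β) 0 with h | h
  · nlinarith [mul_pos hP0 hQ0]
  · have hmul : (M + α ^ 2) * (M + β ^ 2) ≤ P ^ 2 * Q ^ 2 :=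
      mul_le_mul hPa hQb (by positivity) (sq_nonneg P)
    have h2 : (M + α * β) ^ 2 ≤ (P * Q) ^ 2 := by nlinarith [sq_nonneg (α - β)]
    nlinarith [mul_pos hP0 hQ0]

lemma energy_aux (M P Q α β : ℝ) (hM : 0 < M) (hP0 : 0 < P) (hQ0 : 0 < Q)
    (hPa : M + α ^ 2 ≤ P ^ 2) (hQb : M + β ^ 2 ≤ Q ^ 2) :
    2 * (P * β - Q * α) * (α + β) < Q * ((P + Q) ^ 2 - (α + β) ^ 2) := by
  nlinarith [sq_nonneg (Q * α - P * β),
    mul_le_mul_of_nonneg_left (show M ≤ Q ^ 2 - β ^ 2 by linarith) (sq_nonneg (P + Q)),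
    mul_pos (pow_pos (add_pos hP0 hQ0) 2) hM, mul_pos hQ0 hM]

lemma scalar_main (M P Q α β pp qq a : ℝ) (hM : 0 < M) (hP0 : 0 < P) (hQ0 : 0 < Q)
    (hP2 : P ^ 2 = M + pp) (hQ2 : Q ^ 2 = M + qq)
    (hα : α ^ 2 ≤ pp) (hβ : β ^ 2 ≤ qq)
    (ha : a = 2 * (P + Q) * (P * β - Q * α) / ((P + Q) ^ 2 - (α + β) ^ 2)) :
    4 * M ≤ (P + Q) ^ 2 - (α + β) ^ 2 ∧
      Real.sqrt (M + (pp + 2 * a * α + a ^ 2))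
        + Real.sqrt (M + (qq - 2 * a * β + a ^ 2)) = P + Q := by
  have hPa : M + α ^ 2 ≤ P ^ 2 := by linarith
  have hQb : M + β ^ 2 ≤ Q ^ 2 := by linarith
  have hPQ : M + α * β ≤ P * Q := pq_aux M P Q α β hM hP0 hQ0 hPa hQb
  have hD4 : 4 * M ≤ (P + Q) ^ 2 - (α + β) ^ 2 := by nlinarith
  refine ⟨hD4, ?_⟩
  have hD : (0 : ℝ) < (P + Q) ^ 2 - (α + β) ^ 2 := by linarith
  have hE1 := energy_aux M P Q α β hM hP0 hQ0 hPa hQb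
  have hE2 := energy_aux M Q P β α hM hQ0 hP0 hQb hPa
  have hQt : 0 < Q - 2 * (P * β - Q * α) * (α + β) / ((P + Q) ^ 2 - (α + β) ^ 2) := by
    rw [sub_pos, div_lt_iff₀ hD]
    nlinarith [hE1]
  have hPt : 0 < P + 2 * (P * β - Q * α) * (α + β) / ((P + Q) ^ 2 - (α + β) ^ 2) := by
    have heq : P + 2 * (P * β - Q * α) * (α + β) / ((P + Q) ^ 2 - (α + β) ^ 2)
        = (P * ((P + Q) ^ 2 - (α + β) ^ 2) + 2 * (P * β - Q * α) * (α + β))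
          / ((P + Q) ^ 2 - (α + β) ^ 2) := by
      field_simp
    rw [heq]
    apply div_pos _ hD
    nlinarith [hE2]
  have key1 : M + (pp + 2 * a * α + a ^ 2)
      = (P + 2 * (P * β - Q * α) * (α + β) / ((P + Q) ^ 2 - (α + β) ^ 2)) ^ 2 := by
    have hpp' : pp = P ^ 2 - M := by linarith
    rw [hpp', ha]
    field_simp
    ring
  have key2 : M + (qq - 2 * a * β + a ^ 2)
      = (Q - 2 * (P * β - Q * α) * (α + β) / ((P + Q) ^ 2 - (α + β) ^ 2)) ^ 2 := by
    have hqq' : qq = Q ^ 2 - M := by linarith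
    rw [hqq', ha]
    field_simp
    ring
  rw [key1, key2, Real.sqrt_sq hPt.le, Real.sqrt_sq hQt.le]
  ring

lemma dot3_add_right (x y z : Fin 3 → ℝ) : dot3 x (y + z) = dot3 x y + dot3 x z := by
  simp [dot3, Fin.sum_univ_three]; ring

lemma dot3_smul_sub (r s : ℝ) (x y z : Fin 3 → ℝ) :
    dot3 x (r • y - s • z) = r * dot3 x y - s * dot3 x z := by
  simp [dot3, Fin.sum_univ_three]; ring

lemma dot3_expand_add (p ω : Fin 3 → ℝ) (a : ℝ) :
    dot3 (p + a • ω) (p + a • ω) = dot3 p p + 2 * a * dot3 ω p + a ^ 2 * dot3 ω ω := by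
  simp [dot3, Fin.sum_univ_three]; ring

lemma dot3_expand_sub (q ω : Fin 3 → ℝ) (a : ℝ) :
    dot3 (q - a • ω) (q - a • ω) = dot3 q q - 2 * a * dot3 ω q + a ^ 2 * dot3 ω ω := by
  simp [dot3, Fin.sum_univ_three]; ring

/-- For all `p, q ∈ ℝ³` and unit vectors `ω`:
(i) `(p⁰ + q⁰)² − (ω·(p+q))² ≥ 4m²c² > 0`, so `a(p,q,ω)` is well defined; and
(ii) with `p' = p + a ω`, `q' = q − a ω`, total energy is conserved:
`√(m²c² + |p'|²) + √(m²c² + |q'|²) = p⁰ + q⁰`. -/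
theorem stmt6 (m c : ℝ) (hm : 0 < m) (hc : 0 < c) (p q ω : Fin 3 → ℝ)
    (hω : dot3 ω ω = 1) :
    (4 * m ^ 2 * c ^ 2 ≤ (pZero m c p + pZero m c q) ^ 2 - (dot3 ω (p + q)) ^ 2
        ∧ 0 < 4 * m ^ 2 * c ^ 2)
      ∧ Real.sqrt (m ^ 2 * c ^ 2 + dot3 (p + aGS m c p q ω • ω) (p + aGS m c p q ω • ω))
          + Real.sqrt (m ^ 2 * c ^ 2 + dot3 (q - aGS m c p q ω • ω) (q - aGS m c p q ω • ω))
        = pZero m c p + pZero m c q := by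
  have hM : 0 < m ^ 2 * c ^ 2 := by positivity
  have hpp := dot3_self_nonneg p
  have hqq := dot3_self_nonneg q
  have hP0 : 0 < pZero m c p := Real.sqrt_pos.mpr (by linarith)
  have hQ0 : 0 < pZero m c q := Real.sqrt_pos.mpr (by linarith)
  have hP2 : (pZero m c p) ^ 2 = m ^ 2 * c ^ 2 + dot3 p p := Real.sq_sqrt (by linarith)
  have hQ2 : (pZero m c q) ^ 2 = m ^ 2 * c ^ 2 + dot3 q q := Real.sq_sqrt (by linarith)
  have hcsp := cauchy3 ω p hω
  have hcsq := cauchy3 ω q hω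
  have hk : dot3 ω (p + q) = dot3 ω p + dot3 ω q := dot3_add_right ω p q
  have haval : aGS m c p q ω
      = 2 * (pZero m c p + pZero m c q)
          * (pZero m c p * dot3 ω q - pZero m c q * dot3 ω p)
        / ((pZero m c p + pZero m c q) ^ 2 - (dot3 ω p + dot3 ω q) ^ 2) := by
    unfold aGS
    rw [hk, dot3_smul_sub]
  obtain ⟨h4, hsum⟩ := scalar_main (m ^ 2 * c ^ 2) (pZero m c p) (pZero m c q)
    (dot3 ω p) (dot3 ω q) (dot3 p p) (dot3 q q) (aGS m c p q ω)
    hM hP0 hQ0 hP2 hQ2 hcsp hcsq haval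
  refine ⟨⟨?_, by positivity⟩, ?_⟩
  · rw [hk]; linarith [h4]
  · rw [dot3_expand_add, dot3_expand_sub, hω]
    simpa using hsum
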